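/- arXiv:2112.14948 — 6 statements merged into one kernel-verified Lean document; each statement's English description precedes it below -/
import Mathlib

section
/- Let q, p, n be positive integers, let A be a real q×q matrix with operator norm ‖A‖ < 1, let B be a real q×p matrix, let f : ℝⁿ → ℝⁿ be a bijection, and let ℓ : ℝⁿ → ℝᵖ be a bounded function. Then for every x ∈ ℝⁿ the series T(x) = Σ_{j=0}^{∞} Aʲ B ℓ(f^{-(j+1)}(x)) converges absolutely, and the resulting map T : ℝⁿ → ℝ^q satisfies the functional equation T(f(x)) = A T(x) + B ℓ(x) for all x ∈ ℝⁿ. -/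
/-- Lemma 1 (existence and explicit formula): if `‖A‖ < 1`, `f` is a bijection and `ℓ` is
bounded, then the series `T x = ∑_{j≥0} A^j B ℓ(f^{-(j+1)} x)` converges absolutely and
`T` satisfies `T (f x) = A (T x) + B (ℓ x)`. -/
theorem lemma1_existence
    (q p n : ℕ) (hq : 0 < q) (hp : 0 < p) (hn : 0 < n)
    (A : EuclideanSpace ℝ (Fin q) →L[ℝ] EuclideanSpace ℝ (Fin q)) (hA : ‖A‖ < 1)
    (B : EuclideanSpace ℝ (Fin p) →L[ℝ] EuclideanSpace ℝ (Fin q))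
    (f : EuclideanSpace ℝ (Fin n) → EuclideanSpace ℝ (Fin n)) (hf : Function.Bijective f)
    (ℓ : EuclideanSpace ℝ (Fin n) → EuclideanSpace ℝ (Fin p))
    (hℓ : ∃ M : ℝ, ∀ x, ‖ℓ x‖ ≤ M) :
    (∀ x, Summable fun j : ℕ => ‖(A ^ j) (B (ℓ ((Function.invFun f)^[j + 1] x)))‖) ∧
    (∀ x, (∑' j : ℕ, (A ^ j) (B (ℓ ((Function.invFun f)^[j + 1] (f x))))) =
        A (∑' j : ℕ, (A ^ j) (B (ℓ ((Function.invFun f)^[j + 1] x)))) + B (ℓ x)) := by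
  obtain ⟨M, hM⟩ := hℓ
  set g := Function.invFun f with hgdef
  have hg : ∀ x, g (f x) = x := fun x => Function.leftInverse_invFun hf.injective x
  have key : ∀ (j : ℕ) (v : EuclideanSpace ℝ (Fin q)), ‖(A ^ j) v‖ ≤ ‖A‖ ^ j * ‖v‖ := by
    intro j
    induction j with
    | zero =>
        intro v
        simp only [pow_zero, ContinuousLinearMap.one_apply, one_mul]
        exact le_refl _
    | succ k ih =>
        intro v
        have h1 : (A ^ (k + 1)) v = A ((A ^ k) v) := by rw [pow_succ']; rfl
        rw [h1]
        calc ‖A ((A ^ k) v)‖ ≤ ‖A‖ * ‖(A ^ k) v‖ := A.le_opNorm _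
          _ ≤ ‖A‖ * (‖A‖ ^ k * ‖v‖) := by gcongr; exact ih v
          _ = ‖A‖ ^ (k + 1) * ‖v‖ := by ring
  have bound : ∀ (j : ℕ) (z : EuclideanSpace ℝ (Fin n)),
      ‖(A ^ j) (B (ℓ z))‖ ≤ ‖A‖ ^ j * (‖B‖ * max M 0) := by
    intro j z
    calc ‖(A ^ j) (B (ℓ z))‖ ≤ ‖A‖ ^ j * ‖B (ℓ z)‖ := key j _
      _ ≤ ‖A‖ ^ j * (‖B‖ * max M 0) := by
          gcongr
          calc ‖B (ℓ z)‖ ≤ ‖B‖ * ‖ℓ z‖ := B.le_opNorm _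
            _ ≤ ‖B‖ * max M 0 := by gcongr; exact le_max_of_le_left (hM _)
  have hge : Summable fun j : ℕ => ‖A‖ ^ j * (‖B‖ * (max M 0)) :=
    (summable_geometric_of_lt_one (norm_nonneg A) hA).mul_right _
  have hnorm : ∀ x, Summable fun j : ℕ => ‖(A ^ j) (B (ℓ (g^[j + 1] x)))‖ := fun x =>
    Summable.of_nonneg_of_le (fun j => norm_nonneg _) (fun j => bound j _) hge
  have hsum : ∀ x, Summable fun j : ℕ => (A ^ j) (B (ℓ (g^[j + 1] x))) :=
    fun x => Summable.of_norm (hnorm x)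
  refine ⟨hnorm, fun x => ?_⟩
  have hiter : ∀ j : ℕ, g^[j + 1] (f x) = g^[j] x := by
    intro j
    rw [Function.iterate_succ_apply, hg]
  have hL : (∑' j : ℕ, (A ^ j) (B (ℓ (g^[j + 1] (f x)))))
      = ∑' j : ℕ, (A ^ j) (B (ℓ (g^[j] x))) := by
    congr 1
    funext j
    rw [hiter]
  rw [hL]
  have hsum' : Summable fun j : ℕ => (A ^ j) (B (ℓ (g^[j] x))) :=
    Summable.of_norm (Summable.of_nonneg_of_le (fun j => norm_nonneg _)
      (fun j => bound j _) hge)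
  rw [Summable.tsum_eq_zero_add hsum']
  have hshift : (∑' j : ℕ, (A ^ (j + 1)) (B (ℓ (g^[j + 1] x))))
      = A (∑' j : ℕ, (A ^ j) (B (ℓ (g^[j + 1] x)))) := by
    calc (∑' j : ℕ, (A ^ (j + 1)) (B (ℓ (g^[j + 1] x))))
        = ∑' j : ℕ, A ((A ^ j) (B (ℓ (g^[j + 1] x)))) :=
          tsum_congr fun j => by rw [pow_succ']; rfl
      _ = A (∑' j : ℕ, (A ^ j) (B (ℓ (g^[j + 1] x)))) :=
          (ContinuousLinearMap.map_tsum A (hsum x)).symm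
  simp only [pow_zero, ContinuousLinearMap.one_apply, Function.iterate_zero, id_eq]
  rw [hshift, add_comm]
end

section
/- Let A be a real q×q matrix with operator norm ‖A‖ < 1, B a real q×p matrix, f : ℝⁿ → ℝⁿ a bijection, and ℓ : ℝⁿ → ℝᵖ a bounded function. Assume moreover that ℓ is globally Lipschitz with constant L_ℓ, that f⁻¹ is globally Lipschitz with constant L_f, and that ‖A‖·L_f < 1. Then the map T(x) = Σ_{j=0}^{∞} Aʲ B ℓ(f^{-(j+1)}(x)) is globally Lipschitz with Lipschitz constant ‖B‖·L_ℓ·L_f / (1 − ‖A‖·L_f). -/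
/-- Lipschitz continuity of the series solution `T x = ∑_{j≥0} A^j B ℓ(f^{-(j+1)} x)`:
if `ℓ` is `Lℓ`-Lipschitz, `f⁻¹` is `Lf`-Lipschitz and `‖A‖ * Lf < 1`, then `T` is
globally Lipschitz with constant `‖B‖ * Lℓ * Lf / (1 - ‖A‖ * Lf)`. -/
theorem lemma1_T_lipschitz
    (q p n : ℕ)
    (A : EuclideanSpace ℝ (Fin q) →L[ℝ] EuclideanSpace ℝ (Fin q)) (hA : ‖A‖ < 1)
    (B : EuclideanSpace ℝ (Fin p) →L[ℝ] EuclideanSpace ℝ (Fin q))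
    (f : EuclideanSpace ℝ (Fin n) → EuclideanSpace ℝ (Fin n)) (hf : Function.Bijective f)
    (ℓ : EuclideanSpace ℝ (Fin n) → EuclideanSpace ℝ (Fin p))
    (hℓbdd : ∃ M : ℝ, ∀ x, ‖ℓ x‖ ≤ M)
    (Lℓ Lf : ℝ)
    (hℓLip : ∀ x y, ‖ℓ x - ℓ y‖ ≤ Lℓ * ‖x - y‖)
    (hfinvLip : ∀ x y, ‖Function.invFun f x - Function.invFun f y‖ ≤ Lf * ‖x - y‖)
    (hALf : ‖A‖ * Lf < 1) :
    ∀ x y,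
      ‖(∑' j : ℕ, (A ^ j) (B (ℓ ((Function.invFun f)^[j + 1] x)))) -
          (∑' j : ℕ, (A ^ j) (B (ℓ ((Function.invFun f)^[j + 1] y))))‖ ≤
        (‖B‖ * Lℓ * Lf / (1 - ‖A‖ * Lf)) * ‖x - y‖ := by
  intro x y
  set g := Function.invFun f with hg
  by_cases hxy : x = y
  · subst hxy; rw [sub_self, sub_self, norm_zero, norm_zero, mul_zero]
  · have hxy' : (0:ℝ) < ‖x - y‖ := by
      rw [norm_pos_iff]; exact sub_ne_zero_of_ne hxy
    have hLf : 0 ≤ Lf := by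
      have h := hfinvLip x y
      nlinarith [norm_nonneg (g x - g y)]
    have hLℓ : 0 ≤ Lℓ := by
      have h := hℓLip x y
      nlinarith [norm_nonneg (ℓ x - ℓ y)]
    have hr0 : (0:ℝ) ≤ ‖A‖ * Lf := mul_nonneg (norm_nonneg _) hLf
    have hAn : ∀ j : ℕ, ‖A ^ j‖ ≤ ‖A‖ ^ j := by
      intro j
      induction j with
      | zero =>
        rw [pow_zero, pow_zero, ContinuousLinearMap.one_def]
        exact ContinuousLinearMap.norm_id_le
      | succ k ih =>
        calc ‖A ^ (k + 1)‖ = ‖A ^ k * A‖ := by rw [pow_succ]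
          _ ≤ ‖A ^ k‖ * ‖A‖ := norm_mul_le _ _
          _ ≤ ‖A‖ ^ k * ‖A‖ := mul_le_mul_of_nonneg_right ih (norm_nonneg _)
          _ = ‖A‖ ^ (k + 1) := (pow_succ _ _).symm
    -- iterate bound
    have hiter : ∀ k, ‖g^[k] x - g^[k] y‖ ≤ Lf ^ k * ‖x - y‖ := by
      intro k
      induction k with
      | zero => simp
      | succ k ih =>
        rw [Function.iterate_succ_apply', Function.iterate_succ_apply']
        calc ‖g (g^[k] x) - g (g^[k] y)‖ ≤ Lf * ‖g^[k] x - g^[k] y‖ := hfinvLip _ _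
          _ ≤ Lf * (Lf ^ k * ‖x - y‖) := by
              exact mul_le_mul_of_nonneg_left ih hLf
          _ = Lf ^ (k + 1) * ‖x - y‖ := by ring
    -- summability of each series
    obtain ⟨M, hM⟩ := hℓbdd
    have hgeomA : Summable fun j : ℕ => ‖B‖ * M * ‖A‖ ^ j :=
      (summable_geometric_of_lt_one (norm_nonneg A) hA).mul_left _
    have hsum : ∀ z : EuclideanSpace ℝ (Fin n),
        Summable fun j : ℕ => (A ^ j) (B (ℓ (g^[j + 1] z))) := by
      intro z
      apply Summable.of_norm_bounded hgeomA
      intro j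
      calc ‖(A ^ j) (B (ℓ (g^[j + 1] z)))‖ ≤ ‖A ^ j‖ * ‖B (ℓ (g^[j + 1] z))‖ :=
            (A ^ j).le_opNorm _
        _ ≤ ‖A ^ j‖ * (‖B‖ * ‖ℓ (g^[j + 1] z)‖) := by
            exact mul_le_mul_of_nonneg_left (B.le_opNorm _) (norm_nonneg _)
        _ ≤ ‖A‖ ^ j * (‖B‖ * M) := by
            apply mul_le_mul (hAn j)
            · exact mul_le_mul_of_nonneg_left (hM _) (norm_nonneg _)
            · positivity
            · positivity
        _ = ‖B‖ * M * ‖A‖ ^ j := by ring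
    -- termwise difference bound
    set C := ‖B‖ * Lℓ * Lf * ‖x - y‖ with hC
    have hterm : ∀ j : ℕ,
        ‖(A ^ j) (B (ℓ (g^[j + 1] x))) - (A ^ j) (B (ℓ (g^[j + 1] y)))‖ ≤
          C * (‖A‖ * Lf) ^ j := by
      intro j
      rw [← map_sub, ← map_sub]
      calc ‖(A ^ j) (B (ℓ (g^[j + 1] x) - ℓ (g^[j + 1] y)))‖
          ≤ ‖A ^ j‖ * ‖B (ℓ (g^[j + 1] x) - ℓ (g^[j + 1] y))‖ := (A ^ j).le_opNorm _
        _ ≤ ‖A ^ j‖ * (‖B‖ * ‖ℓ (g^[j + 1] x) - ℓ (g^[j + 1] y)‖) :=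
            mul_le_mul_of_nonneg_left (B.le_opNorm _) (norm_nonneg _)
        _ ≤ ‖A‖ ^ j * (‖B‖ * (Lℓ * (Lf ^ (j + 1) * ‖x - y‖))) := by
            apply mul_le_mul (hAn j)
            · apply mul_le_mul_of_nonneg_left _ (norm_nonneg B)
              calc ‖ℓ (g^[j + 1] x) - ℓ (g^[j + 1] y)‖
                  ≤ Lℓ * ‖g^[j + 1] x - g^[j + 1] y‖ := hℓLip _ _
                _ ≤ Lℓ * (Lf ^ (j + 1) * ‖x - y‖) :=
                    mul_le_mul_of_nonneg_left (hiter (j + 1)) hLℓ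
            · positivity
            · positivity
        _ = C * (‖A‖ * Lf) ^ j := by rw [hC]; ring
    have hgeomC : Summable fun j : ℕ => C * (‖A‖ * Lf) ^ j :=
      (summable_geometric_of_lt_one hr0 hALf).mul_left _
    have hnorm : Summable fun j : ℕ =>
        ‖(A ^ j) (B (ℓ (g^[j + 1] x))) - (A ^ j) (B (ℓ (g^[j + 1] y)))‖ :=
      Summable.of_nonneg_of_le (fun j => norm_nonneg _) hterm hgeomC
    calc ‖(∑' j : ℕ, (A ^ j) (B (ℓ (g^[j + 1] x)))) -
          (∑' j : ℕ, (A ^ j) (B (ℓ (g^[j + 1] y))))‖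
        = ‖∑' j : ℕ, ((A ^ j) (B (ℓ (g^[j + 1] x))) - (A ^ j) (B (ℓ (g^[j + 1] y))))‖ := by
          rw [Summable.tsum_sub (hsum x) (hsum y)]
      _ ≤ ∑' j : ℕ, ‖(A ^ j) (B (ℓ (g^[j + 1] x))) - (A ^ j) (B (ℓ (g^[j + 1] y)))‖ :=
          norm_tsum_le_tsum_norm hnorm
      _ ≤ ∑' j : ℕ, C * (‖A‖ * Lf) ^ j := Summable.tsum_le_tsum hterm hnorm hgeomC
      _ = C * (1 - ‖A‖ * Lf)⁻¹ := by
          rw [tsum_mul_left, tsum_geometric_of_lt_one hr0 hALf]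
      _ = (‖B‖ * Lℓ * Lf / (1 - ‖A‖ * Lf)) * ‖x - y‖ := by
          rw [hC, div_eq_mul_inv]; ring
end

section
/- Let A be a real q×q matrix whose powers satisfy Aᵏ → 0 as k → ∞, let B be a real q×p matrix, let f : ℝⁿ → ℝⁿ be a bijection, and let ℓ : ℝⁿ → ℝᵖ be any function. If S₁, S₂ : ℝⁿ → ℝ^q are bounded functions that both satisfy S(f(x)) = A S(x) + B ℓ(x) for all x ∈ ℝⁿ, then S₁ = S₂. -/
/-- Uniqueness part of Lemma 1: if `A^k → 0`, then the functional equation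
`S (f x) = A (S x) + B (ℓ x)` has at most one bounded solution. -/
theorem lemma1_uniqueness
    (q p n : ℕ)
    (A : EuclideanSpace ℝ (Fin q) →L[ℝ] EuclideanSpace ℝ (Fin q))
    (hA : Filter.Tendsto (fun k : ℕ => A ^ k) Filter.atTop (nhds 0))
    (B : EuclideanSpace ℝ (Fin p) →L[ℝ] EuclideanSpace ℝ (Fin q))
    (f : EuclideanSpace ℝ (Fin n) → EuclideanSpace ℝ (Fin n)) (hf : Function.Bijective f)
    (ℓ : EuclideanSpace ℝ (Fin n) → EuclideanSpace ℝ (Fin p))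
    (S₁ S₂ : EuclideanSpace ℝ (Fin n) → EuclideanSpace ℝ (Fin q))
    (hS₁bdd : ∃ M : ℝ, ∀ x, ‖S₁ x‖ ≤ M)
    (hS₂bdd : ∃ M : ℝ, ∀ x, ‖S₂ x‖ ≤ M)
    (hS₁ : ∀ x, S₁ (f x) = A (S₁ x) + B (ℓ x))
    (hS₂ : ∀ x, S₂ (f x) = A (S₂ x) + B (ℓ x)) :
    S₁ = S₂ := by
  obtain ⟨M₁, hM₁⟩ := hS₁bdd
  obtain ⟨M₂, hM₂⟩ := hS₂bdd
  set D : EuclideanSpace ℝ (Fin n) → EuclideanSpace ℝ (Fin q) :=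
    fun x => S₁ x - S₂ x with hD
  set g := Function.invFun f with hg
  have hfg : ∀ x, f (g x) = x := Function.rightInverse_invFun hf.2
  have key : ∀ x, D x = A (D (g x)) := by
    intro x
    have h1 := hS₁ (g x)
    have h2 := hS₂ (g x)
    rw [hfg] at h1 h2
    simp [hD, h1, h2, map_sub]
  have iter : ∀ (k : ℕ) x, D x = (A ^ k) (D (g^[k] x)) := by
    intro k
    induction k with
    | zero => simp
    | succ m ih =>
      intro x
      rw [key x, ih (g x), ← Function.iterate_succ_apply]
      rw [pow_succ']
      rfl
  funext x
  have hbound : ∀ k : ℕ, ‖D x‖ ≤ ‖A ^ k‖ * (M₁ + M₂) := by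
    intro k
    rw [iter k x]
    calc ‖(A ^ k) (D (g^[k] x))‖ ≤ ‖A ^ k‖ * ‖D (g^[k] x)‖ :=
          (A ^ k).le_opNorm _
      _ ≤ ‖A ^ k‖ * (M₁ + M₂) := by
          apply mul_le_mul_of_nonneg_left _ (norm_nonneg _)
          calc ‖D (g^[k] x)‖ ≤ ‖S₁ (g^[k] x)‖ + ‖S₂ (g^[k] x)‖ := norm_sub_le _ _
            _ ≤ M₁ + M₂ := add_le_add (hM₁ _) (hM₂ _)
  have hlim : Filter.Tendsto (fun k : ℕ => ‖A ^ k‖ * (M₁ + M₂)) Filter.atTop (nhds 0) := by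
    have h := hA.norm
    rw [norm_zero] at h
    have h2 := h.mul_const (M₁ + M₂)
    rw [zero_mul] at h2
    exact h2
  have hDx : ‖D x‖ ≤ 0 :=
    le_of_tendsto_of_tendsto' tendsto_const_nhds hlim hbound
  have : D x = 0 := norm_le_zero_iff.mp hDx
  have := sub_eq_zero.mp this
  exact this
end

section
/- Let A be a real q×q matrix with ‖A‖ < 1, B a real q×p matrix, f : ℝⁿ → ℝⁿ, ℓ : ℝⁿ → ℝᵖ, and T : ℝⁿ → ℝ^q with T(f(x)) = A T(x) + B ℓ(x) for all x. Let x_{k+1} = f(x_k), z_{k+1} = A z_k + B ℓ(x_k), and suppose there is a uniformly continuous map T⁻¹ : ℝ^q → ℝⁿ such that T⁻¹(T(x_k)) = x_k for every k. Then the state estimate x̂_k := T⁻¹(z_k) satisfies ‖x̂_k − x_k‖ → 0 as k → ∞. -/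
/-- Full observer statement of Lemma 1: with a uniformly continuous left inverse `T⁻¹`
of `T` along the trajectory, the state estimate `x̂_k = T⁻¹(z_k)` satisfies
`‖x̂_k - x_k‖ → 0`. -/
theorem observer_state_estimate_convergence
    (q p n : ℕ)
    (A : EuclideanSpace ℝ (Fin q) →L[ℝ] EuclideanSpace ℝ (Fin q)) (hA : ‖A‖ < 1)
    (B : EuclideanSpace ℝ (Fin p) →L[ℝ] EuclideanSpace ℝ (Fin q))
    (f : EuclideanSpace ℝ (Fin n) → EuclideanSpace ℝ (Fin n))
    (ℓ : EuclideanSpace ℝ (Fin n) → EuclideanSpace ℝ (Fin p))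
    (T : EuclideanSpace ℝ (Fin n) → EuclideanSpace ℝ (Fin q))
    (hT : ∀ x, T (f x) = A (T x) + B (ℓ x))
    (x : ℕ → EuclideanSpace ℝ (Fin n)) (hx : ∀ k, x (k + 1) = f (x k))
    (z : ℕ → EuclideanSpace ℝ (Fin q)) (hz : ∀ k, z (k + 1) = A (z k) + B (ℓ (x k)))
    (Tinv : EuclideanSpace ℝ (Fin q) → EuclideanSpace ℝ (Fin n))
    (hTinvUC : UniformContinuous Tinv)
    (hTinv : ∀ k, Tinv (T (x k)) = x k) :
    Filter.Tendsto (fun k : ℕ => ‖Tinv (z k) - x k‖) Filter.atTop (nhds 0) := by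
  -- error dynamics: e k = z k - T (x k) satisfies e (k+1) = A (e k)
  have he : ∀ k, z k - T (x k) = (A ^ k) (z 0 - T (x 0)) := by
    intro k
    induction k with
    | zero => simp
    | succ k ih =>
      rw [hz, hx, hT, pow_succ', ContinuousLinearMap.mul_apply, ← ih, map_sub]
      abel
  -- ‖z k - T (x k)‖ → 0
  have hzn : Filter.Tendsto (fun k => dist (z k) (T (x k))) Filter.atTop (nhds 0) := by
    have hbound : ∀ k, dist (z k) (T (x k)) ≤ ‖A‖ ^ k * ‖z 0 - T (x 0)‖ := by
      intro k
      rw [dist_eq_norm, he k]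
      calc ‖(A ^ k) (z 0 - T (x 0))‖ ≤ ‖A ^ k‖ * ‖z 0 - T (x 0)‖ :=
            (A ^ k).le_opNorm _
        _ ≤ ‖A‖ ^ k * ‖z 0 - T (x 0)‖ := by
            gcongr
            cases k with
            | zero =>
                rw [pow_zero, pow_zero, ContinuousLinearMap.one_def]
                exact ContinuousLinearMap.norm_id_le
            | succ m => exact norm_pow_le' A m.succ_pos
    have hpow : Filter.Tendsto (fun k : ℕ => ‖A‖ ^ k * ‖z 0 - T (x 0)‖) Filter.atTop (nhds 0) := by
      rw [show (0 : ℝ) = 0 * ‖z 0 - T (x 0)‖ by ring]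
      exact (tendsto_pow_atTop_nhds_zero_of_lt_one (norm_nonneg A) hA).mul_const _
    exact squeeze_zero (fun k => dist_nonneg) hbound hpow
  -- conclude via uniform continuity
  rw [Metric.tendsto_atTop]
  intro ε hε
  rw [Metric.uniformContinuous_iff] at hTinvUC
  obtain ⟨δ, hδ, hδ'⟩ := hTinvUC ε hε
  rw [Metric.tendsto_atTop] at hzn
  obtain ⟨N, hN⟩ := hzn δ hδ
  refine ⟨N, fun k hk => ?_⟩
  have h1 : dist (z k) (T (x k)) < δ := by
    have := hN k hk
    rwa [Real.dist_eq, sub_zero, abs_of_nonneg dist_nonneg] at this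
  have h2 := hδ' h1
  rw [hTinv k, dist_eq_norm] at h2
  rwa [Real.dist_eq, sub_zero, abs_of_nonneg (norm_nonneg _)]
end

section
/- Let A be a real q×q matrix, B a real q×p matrix, f : ℝⁿ × ℝᵐ → ℝⁿ, ℓ : ℝⁿ → ℝᵖ, and Ω : ℝ^q × ℝᵐ → ℝ^q. Let λ ≥ 0 satisfy ‖A‖ + λ < 1 and suppose ‖Ω(z₁,u) − Ω(z₂,u)‖ ≤ λ ‖z₁ − z₂‖ for all z₁, z₂ ∈ ℝ^q and all u ∈ ℝᵐ. Suppose T : ℝⁿ → ℝ^q satisfies T(f(x,u)) = A T(x) + B ℓ(x) + Ω(T(x),u) for all x ∈ ℝⁿ and u ∈ ℝᵐ. Then for any input sequence (u_k), any trajectory x_{k+1} = f(x_k,u_k), and the observer z_{k+1} = A z_k + B ℓ(x_k) + Ω(z_k,u_k), one has ‖z_k − T(x_k)‖ ≤ (‖A‖+λ)ᵏ ‖z₀ − T(x₀)‖ for all k ≥ 0; in particular z_k − T(x_k) → 0. -/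
/-- Lemma 2 (non-autonomous observer): if `Ω` is `λ`-Lipschitz in `z`, `‖A‖ + λ < 1`, and
`T (f (x,u)) = A (T x) + B (ℓ x) + Ω (T x, u)`, then the observer error of
`z_{k+1} = A z_k + B ℓ(x_k) + Ω(z_k, u_k)` satisfies
`‖z_k - T x_k‖ ≤ (‖A‖ + λ)^k ‖z_0 - T x_0‖` and tends to zero. -/
theorem lemma2_nonautonomous_observer
    (q p n m : ℕ)
    (A : EuclideanSpace ℝ (Fin q) →L[ℝ] EuclideanSpace ℝ (Fin q))
    (B : EuclideanSpace ℝ (Fin p) →L[ℝ] EuclideanSpace ℝ (Fin q))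
    (f : EuclideanSpace ℝ (Fin n) × EuclideanSpace ℝ (Fin m) → EuclideanSpace ℝ (Fin n))
    (ℓ : EuclideanSpace ℝ (Fin n) → EuclideanSpace ℝ (Fin p))
    (Ω : EuclideanSpace ℝ (Fin q) × EuclideanSpace ℝ (Fin m) → EuclideanSpace ℝ (Fin q))
    (lam : ℝ) (hlam : 0 ≤ lam) (hcontraction : ‖A‖ + lam < 1)
    (hΩ : ∀ (z₁ z₂ : EuclideanSpace ℝ (Fin q)) (u : EuclideanSpace ℝ (Fin m)),
      ‖Ω (z₁, u) - Ω (z₂, u)‖ ≤ lam * ‖z₁ - z₂‖)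
    (T : EuclideanSpace ℝ (Fin n) → EuclideanSpace ℝ (Fin q))
    (hT : ∀ (x : EuclideanSpace ℝ (Fin n)) (u : EuclideanSpace ℝ (Fin m)),
      T (f (x, u)) = A (T x) + B (ℓ x) + Ω (T x, u))
    (u : ℕ → EuclideanSpace ℝ (Fin m))
    (x : ℕ → EuclideanSpace ℝ (Fin n)) (hx : ∀ k, x (k + 1) = f (x k, u k))
    (z : ℕ → EuclideanSpace ℝ (Fin q))
    (hz : ∀ k, z (k + 1) = A (z k) + B (ℓ (x k)) + Ω (z k, u k)) :
    (∀ k : ℕ, ‖z k - T (x k)‖ ≤ (‖A‖ + lam) ^ k * ‖z 0 - T (x 0)‖) ∧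
    Filter.Tendsto (fun k : ℕ => z k - T (x k)) Filter.atTop (nhds 0) := by
  have key : ∀ k : ℕ, ‖z k - T (x k)‖ ≤ (‖A‖ + lam) ^ k * ‖z 0 - T (x 0)‖ := by
    intro k
    induction k with
    | zero => rw [pow_zero, one_mul]
    | succ k ih =>
      have hstep : z (k + 1) - T (x (k + 1)) =
          A (z k - T (x k)) + (Ω (z k, u k) - Ω (T (x k), u k)) := by
        rw [hz k, hx k, hT (x k) (u k), map_sub]
        abel
      calc ‖z (k + 1) - T (x (k + 1))‖
          ≤ ‖A (z k - T (x k))‖ + ‖Ω (z k, u k) - Ω (T (x k), u k)‖ := by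
            rw [hstep]; exact norm_add_le _ _
        _ ≤ ‖A‖ * ‖z k - T (x k)‖ + lam * ‖z k - T (x k)‖ :=
            add_le_add (A.le_opNorm _) (hΩ _ _ _)
        _ = (‖A‖ + lam) * ‖z k - T (x k)‖ := by ring
        _ ≤ (‖A‖ + lam) * ((‖A‖ + lam) ^ k * ‖z 0 - T (x 0)‖) := by
            apply mul_le_mul_of_nonneg_left ih
            positivity
        _ = (‖A‖ + lam) ^ (k + 1) * ‖z 0 - T (x 0)‖ := by ring
  refine ⟨key, ?_⟩
  rw [tendsto_zero_iff_norm_tendsto_zero]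
  have h1 : Filter.Tendsto (fun k : ℕ => (‖A‖ + lam) ^ k * ‖z 0 - T (x 0)‖)
      Filter.atTop (nhds 0) := by
    rw [show (0 : ℝ) = 0 * ‖z 0 - T (x 0)‖ by ring]
    exact (tendsto_pow_atTop_nhds_zero_of_abs_lt_one (by
      rw [abs_of_nonneg (by positivity)]; exact hcontraction)).mul_const _
  exact squeeze_zero (fun k => norm_nonneg _) key h1
end

section
/- Let a > 0, c ≠ 0, and Δ ≠ 0 be real numbers, and define g(φ) = a·exp(−(φ/c)²). Then the map φ ↦ (g(φ), g(φ+Δ)) from ℝ to ℝ² is injective. -/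
/-- Observability via a second shifted receiver: for the Gaussian response
`g(φ) = a exp(-(φ/c)²)` with `a > 0`, `c ≠ 0` and shift `Δ ≠ 0`, the map
`φ ↦ (g φ, g (φ + Δ))` is injective. -/
theorem two_receivers_injective
    (a c Δ : ℝ) (ha : 0 < a) (hc : c ≠ 0) (hΔ : Δ ≠ 0)
    (g : ℝ → ℝ) (hg : ∀ φ : ℝ, g φ = a * Real.exp (-(φ / c) ^ 2)) :
    Function.Injective (fun φ : ℝ => (g φ, g (φ + Δ))) := by
  have key : ∀ x y : ℝ, g x = g y → x ^ 2 = y ^ 2 := by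
    intro x y h
    rw [hg, hg] at h
    have h2 := mul_left_cancel₀ (ne_of_gt ha) h
    have h3 := Real.exp_injective h2
    have h4 : (x / c) ^ 2 = (y / c) ^ 2 := by linarith [neg_injective h3]
    field_simp at h4
    exact h4
  intro x y h
  simp only [Prod.mk.injEq] at h
  have h1 := key _ _ h.1
  have h2 := key _ _ h.2
  have h3 : 2 * Δ * x = 2 * Δ * y := by nlinarith
  exact mul_left_cancel₀ (by simpa using hΔ) h3
end
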